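/- Let k be a positive integer and let u ≥ k be a real number. Then ∫_u^∞ (t^k e^{-t} / k!) dt ≤ e^{-(√u − √k)²}. -/

import Mathlib

open MeasureTheory

open Finset in
lemma aux_tail_integral (k : ℕ) (u : ℝ) (hu : 0 < u) :
    ∫ t in Set.Ioi u, t ^ k * Real.exp (-t) =
      Real.exp (-u) * ∑ j ∈ range (k + 1), ((k.factorial : ℝ) / j.factorial) * u ^ j := by
  set c : ℕ → ℝ := fun j => (k.factorial : ℝ) / j.factorial with hc
  set S : ℝ → ℝ := fun t => ∑ j ∈ range (k + 1), c j * t ^ j with hS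
  have hSderiv : ∀ t : ℝ, HasDerivAt S (S t - t ^ k) t := by
    intro t
    have h : HasDerivAt S (∑ j ∈ range (k + 1), c j * (j * t ^ (j - 1))) t := by
      apply HasDerivAt.fun_sum
      intro j _
      exact (hasDerivAt_pow j t).const_mul (c j)
    convert h using 1
    have hre : ∑ j ∈ range (k + 1), c j * (j * t ^ (j - 1))
        = ∑ j ∈ range k, c j * t ^ j := by
      rw [Finset.sum_range_succ' (fun j => c j * (j * t ^ (j - 1))) k]
      simp only [Nat.cast_zero, zero_mul, mul_zero, add_zero]
      apply Finset.sum_congr rfl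
      intro j _
      have hfac : (c (j + 1)) * ((j : ℝ) + 1) = c j := by
        rw [hc]
        field_simp [Nat.factorial_succ]
        rw [Nat.factorial_succ]; push_cast; ring
      simp only [Nat.add_sub_cancel]
      push_cast
      calc c (j + 1) * (((j : ℝ) + 1) * t ^ j)
          = (c (j + 1) * ((j : ℝ) + 1)) * t ^ j := by ring
        _ = c j * t ^ j := by rw [hfac]
    rw [hre, hS]
    simp only
    rw [Finset.sum_range_succ]
    have hck : c k = 1 := by
      rw [hc]; exact div_self (by positivity)
    rw [hck]; ring
  have hFderiv : ∀ t : ℝ, HasDerivAt (fun t => -(Real.exp (-t) * S t))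
      (t ^ k * Real.exp (-t)) t := by
    intro t
    have he : HasDerivAt (fun t : ℝ => Real.exp (-t)) (-Real.exp (-t)) t := by
      simpa [Function.comp_def] using (Real.hasDerivAt_exp (-t)).comp t (hasDerivAt_neg t)
    have := ((he.mul (hSderiv t)).neg)
    convert this using 1
    · rfl
    · rfl
    · rfl
    ring
  have hint : IntegrableOn (fun t : ℝ => t ^ k * Real.exp (-t)) (Set.Ioi u) := by
    have h0 : IntegrableOn (fun x : ℝ => Real.exp (-x) * x ^ ((k + 1 : ℝ) - 1)) (Set.Ioi 0) :=
      Real.GammaIntegral_convergent (by positivity)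
    have h1 : IntegrableOn (fun x : ℝ => Real.exp (-x) * x ^ ((k + 1 : ℝ) - 1)) (Set.Ioi u) :=
      h0.mono_set (Set.Ioi_subset_Ioi hu.le)
    apply h1.congr_fun _ measurableSet_Ioi
    intro x hx
    have hx0 : (0 : ℝ) < x := lt_trans hu hx
    simp only [show (k + 1 : ℝ) - 1 = (k : ℝ) by ring, Real.rpow_natCast]
    ring
  have htend : Filter.Tendsto (fun t => -(Real.exp (-t) * S t)) Filter.atTop (nhds 0) := by
    have : Filter.Tendsto (fun t => Real.exp (-t) * S t) Filter.atTop (nhds 0) := by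
      have : Filter.Tendsto (fun t : ℝ => ∑ j ∈ range (k + 1), c j * (t ^ j * Real.exp (-t)))
          Filter.atTop (nhds (∑ j ∈ range (k + 1), c j * 0)) := by
        apply tendsto_finset_sum
        intro j _
        exact (Real.tendsto_pow_mul_exp_neg_atTop_nhds_zero j).const_mul (c j)
      simp only [mul_zero, Finset.sum_const_zero] at this
      apply this.congr
      intro t
      rw [hS, Finset.mul_sum]
      apply Finset.sum_congr rfl
      intro j _
      ring
    simpa using this.neg
  have := integral_Ioi_of_hasDerivAt_of_tendsto
    (f := fun t => -(Real.exp (-t) * S t)) (f' := fun t => t ^ k * Real.exp (-t))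
    ((hFderiv u).continuousAt.continuousWithinAt)
    (fun x _ => hFderiv x) hint htend
  rw [this]
  ring

theorem stmt_4 (k : ℕ) (hk : 0 < k) (u : ℝ) (hu : (k : ℝ) ≤ u) :
    ∫ t in Set.Ioi u, t ^ k * Real.exp (-t) / (Nat.factorial k) ≤
      Real.exp (-(Real.sqrt u - Real.sqrt k) ^ 2) := by
  have hk0 : (0 : ℝ) < k := by exact_mod_cast hk
  have hu0 : (0 : ℝ) < u := lt_of_lt_of_le hk0 hu
  have hfac : (0 : ℝ) < (k.factorial : ℝ) := by positivity
  have hI : ∫ t in Set.Ioi u, t ^ k * Real.exp (-t) / (Nat.factorial k) =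
      Real.exp (-u) * ∑ j ∈ Finset.range (k + 1), u ^ j / j.factorial := by
    rw [integral_div, aux_tail_integral k u hu0, Finset.mul_sum, Finset.mul_sum,
      Finset.sum_div]
    apply Finset.sum_congr rfl
    intro j _
    field_simp
  rw [hI]
  -- bound the sum : ∑ u^j/j! ≤ (u/k)^k * exp k
  have hduk : (1 : ℝ) ≤ u / k := (one_le_div hk0).mpr hu
  have hsum : ∑ j ∈ Finset.range (k + 1), u ^ j / j.factorial ≤
      (u / k) ^ k * Real.exp k := by
    calc ∑ j ∈ Finset.range (k + 1), u ^ j / j.factorial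
        ≤ ∑ j ∈ Finset.range (k + 1), (u / k) ^ k * ((k : ℝ) ^ j / j.factorial) := by
          apply Finset.sum_le_sum
          intro j hj
          have hjk : j ≤ k := Nat.lt_succ_iff.mp (Finset.mem_range.mp hj)
          have h1 : u ^ j = (u / k) ^ j * (k : ℝ) ^ j := by
            rw [div_pow]
            field_simp
          have h2 : (u / k) ^ j ≤ (u / k) ^ k := pow_le_pow_right₀ hduk hjk
          rw [h1]
          rw [div_le_iff₀ (by positivity : (0:ℝ) < (j.factorial : ℝ))]
          have hkj : (0:ℝ) ≤ (k : ℝ) ^ j := by positivity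
          calc (u / k) ^ j * (k : ℝ) ^ j ≤ (u / k) ^ k * (k : ℝ) ^ j :=
                mul_le_mul_of_nonneg_right h2 hkj
            _ = (u / k) ^ k * ((k : ℝ) ^ j / j.factorial) * j.factorial := by
                field_simp
      _ = (u / k) ^ k * ∑ j ∈ Finset.range (k + 1), ((k : ℝ) ^ j / j.factorial) := by
          rw [Finset.mul_sum]
      _ ≤ (u / k) ^ k * Real.exp k := by
          apply mul_le_mul_of_nonneg_left _ (by positivity)
          exact Real.sum_le_exp_of_nonneg hk0.le (k + 1)
  have hexp : Real.exp (-u) * ((u / k) ^ k * Real.exp k) ≤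
      Real.exp (-(Real.sqrt u - Real.sqrt k) ^ 2) := by
    have hpow : (u / k) ^ k = Real.exp (k * Real.log (u / k)) := by
      rw [← Real.rpow_natCast (u / k) k, Real.rpow_def_of_pos (by positivity), mul_comm]
    rw [hpow, ← Real.exp_add, ← Real.exp_add, Real.exp_le_exp]
    -- log inequality
    set a := Real.sqrt u with ha
    set b := Real.sqrt k with hb
    have ha2 : a ^ 2 = u := Real.sq_sqrt hu0.le
    have hb2 : b ^ 2 = (k : ℝ) := Real.sq_sqrt hk0.le
    have hb0 : 0 < b := Real.sqrt_pos.mpr hk0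
    have ha0 : 0 < a := Real.sqrt_pos.mpr hu0
    have hlog : Real.log (u / k) ≤ 2 * (a / b - 1) := by
      have h1 : Real.log (a / b) ≤ a / b - 1 := Real.log_le_sub_one_of_pos (by positivity)
      have h2 : Real.log (u / k) = 2 * Real.log (a / b) := by
        have : u / k = (a / b) ^ 2 := by
          rw [div_pow, ha2, hb2]
        rw [this, Real.log_pow]
        push_cast; ring
      rw [h2]; linarith
    have hklog : (k : ℝ) * Real.log (u / k) ≤ 2 * a * b - 2 * b ^ 2 := by
      have h3 : (k : ℝ) * Real.log (u / k) ≤ (k : ℝ) * (2 * (a / b - 1)) :=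
        mul_le_mul_of_nonneg_left hlog hk0.le
      have h4 : (k : ℝ) * (2 * (a / b - 1)) = 2 * a * b - 2 * b ^ 2 := by
        rw [← hb2]
        field_simp
      linarith
    have : -(a - b) ^ 2 = -u - (k : ℝ) + 2 * a * b := by
      rw [← ha2, ← hb2]; ring
    rw [this]
    linarith
  calc Real.exp (-u) * ∑ j ∈ Finset.range (k + 1), u ^ j / j.factorial
      ≤ Real.exp (-u) * ((u / k) ^ k * Real.exp k) :=
        mul_le_mul_of_nonneg_left hsum (Real.exp_nonneg _)
    _ ≤ Real.exp (-(Real.sqrt u - Real.sqrt k) ^ 2) := hexp
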